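/- If ∑_{u,v≥1} ‖E_{1,1}(X_{u,v})‖_2 / (uv)^{1/2} < ∞, then |E_{0,0}(S_{n,m})| / (nm)^{1/2} → 0 almost surely as n∧m → ∞; in particular ∑_{u≥1}∑_{v≥1} |E_{0,0}(X_{u,v})| / (uv)^{1/2} < ∞ almost surely. -/

import Mathlib

open MeasureTheory ProbabilityTheory Filter Topology ENNReal NNReal BoundedContinuousFunction

noncomputable section

/-- The canonical space `Ω = ℝ^{ℤ²}`. -/
abbrev Ω2 : Type := (ℤ × ℤ) → ℝ

/-- The shift by `u ∈ ℤ²`; `T^{u₁} S^{u₂}`. -/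
def shift2 (u : ℤ × ℤ) (ω : Ω2) : Ω2 := fun v => ω (v + u)

/-- The σ-algebra `F_{k,ℓ} = σ(ξ_{j,u} : j ≤ k, u ≤ ℓ)` generated by the coordinates with
index coordinatewise `≤ (k, ℓ)`. -/
def Ffil (k l : ℤ) : MeasurableSpace Ω2 :=
  ⨆ (p : ℤ × ℤ) (_ : p.1 ≤ k ∧ p.2 ≤ l),
    MeasurableSpace.comap (fun ω : Ω2 => ω p) inferInstance

/-- The stationary random field `X_{j,k} = f(T^j S^k ξ)`. -/
def Xf (f : Ω2 → ℝ) (u : ℤ × ℤ) : Ω2 → ℝ := fun ω => f (shift2 u ω)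

/-- Partial sums `S_{n,m} = ∑_{u=1}^n ∑_{v=1}^m X_{u,v}`. -/
def Ssum (f : Ω2 → ℝ) (n m : ℕ) : Ω2 → ℝ := fun ω =>
  ∑ u ∈ Finset.Icc 1 n, ∑ v ∈ Finset.Icc 1 m, Xf f ((u : ℤ), (v : ℤ)) ω

/-- The projection operator
`P_{i,j}(g) = E_{i,j}(g) − E_{i−1,j}(g) − E_{i,j−1}(g) + E_{i−1,j−1}(g)`. -/
def Pproj (μ : Measure Ω2) (i j : ℤ) (g : Ω2 → ℝ) : Ω2 → ℝ := fun ω =>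
  (μ[g|Ffil i j]) ω - (μ[g|Ffil (i - 1) j]) ω - (μ[g|Ffil i (j - 1)]) ω
    + (μ[g|Ffil (i - 1) (j - 1)]) ω

/-- The random centering `R_{n,m} = E_{n,0}(S_{n,m}) + E_{0,m}(S_{n,m}) − E_{0,0}(S_{n,m})`. -/
def Rcenter (μ : Measure Ω2) (f : Ω2 → ℝ) (n m : ℕ) : Ω2 → ℝ := fun ω =>
  (μ[Ssum f n m|Ffil n 0]) ω + (μ[Ssum f n m|Ffil 0 m]) ω - (μ[Ssum f n m|Ffil 0 0]) ω

/-- Condition A: `X_{j,k} = f(T^j S^k ξ)` with `f` measurable with respect to `F_{0,0}`,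
`X_{0,0}` square integrable and centered, the field is (strictly) stationary,
the filtration is commuting, and one of the two shifts `T`, `S` is ergodic. -/
structure ConditionA (μ : Measure Ω2) (f : Ω2 → ℝ) : Prop where
  meas : Measurable[Ffil 0 0] f
  sq_int : MemLp f 2 μ
  centered : ∫ ω, f ω ∂μ = 0
  stationary : ∀ u : ℤ × ℤ, MeasurePreserving (shift2 u) μ μ
  commuting : ∀ (a b u v : ℤ) (g : Ω2 → ℝ), Integrable g μ →
    μ[ μ[g|Ffil a b] | Ffil u v] =ᵐ[μ] μ[g|Ffil (min a u) (min b v)]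
  ergodic : Ergodic (shift2 (1, 0)) μ ∨ Ergodic (shift2 (0, 1)) μ

/-- The limiting variance `σ² = ‖∑_{u,v ≥ 0} P_{0,0}(X_{u,v})‖₂²`. -/
def sigmaSq (μ : Measure Ω2) (f : Ω2 → ℝ) : ℝ :=
  ∫ ω, (∑' uv : ℕ × ℕ, Pproj μ 0 0 (Xf f ((uv.1 : ℤ), (uv.2 : ℤ))) ω) ^ 2 ∂μ

/-- Quenched CLT for a one-parameter family `Y_n`, as `n → ∞`: for almost every `ω`,
under the regular conditional probability `P^ω = P(·|F_{0,0})(ω)`, the law of `Y_n`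
converges weakly to the normal law `N(0, σ²)`. -/
def QuenchedCLT1 (μ : Measure Ω2) [IsFiniteMeasure μ] (Y : ℕ → Ω2 → ℝ) (σ2 : ℝ) : Prop :=
  ∀ᵐ ω ∂μ, ∀ g : ℝ →ᵇ ℝ,
    Tendsto (fun n : ℕ => ∫ x, g (Y n x) ∂(condExpKernel μ (Ffil 0 0) ω))
      atTop (𝓝 (∫ x, g x ∂(gaussianReal 0 (Real.toNNReal σ2))))

/-- Quenched CLT for a two-parameter family `Y_{n,m}`, as `n ∧ m → ∞` (that is, along the
product `atTop` filter, both indices tending to infinity): for almost every `ω`, under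
`P^ω = P(·|F_{0,0})(ω)`, the law of `Y_{n,m}` converges weakly to `N(0, σ²)`. -/
def QuenchedCLT2 (μ : Measure Ω2) [IsFiniteMeasure μ] (Y : ℕ → ℕ → Ω2 → ℝ) (σ2 : ℝ) : Prop :=
  ∀ᵐ ω ∂μ, ∀ g : ℝ →ᵇ ℝ,
    Tendsto (fun nm : ℕ × ℕ => ∫ x, g (Y nm.1 nm.2 x) ∂(condExpKernel μ (Ffil 0 0) ω))
      atTop (𝓝 (∫ x, g x ∂(gaussianReal 0 (Real.toNNReal σ2))))

end

private lemma sum_Icc_one {M : Type*} [AddCommMonoid M] (n : ℕ) (h : ℕ → M) :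
    ∑ u ∈ Finset.Icc 1 n, h u = ∑ i ∈ Finset.range n, h (1 + i) := by
  rw [← Finset.Ico_add_one_right_eq_Icc, Finset.sum_Ico_eq_sum_range]
  simp

private lemma kron2 {b : ℕ × ℕ → ℝ} (hb : ∀ p, 0 ≤ b p) (hs : Summable b) :
    Tendsto (fun nm : ℕ × ℕ =>
      (∑ p ∈ Finset.range nm.1 ×ˢ Finset.range nm.2,
        Real.sqrt (((p.1 : ℝ) + 1) * ((p.2 : ℝ) + 1)) * b p) / Real.sqrt ((nm.1 : ℝ) * (nm.2 : ℝ)))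
      atTop (𝓝 0) := by
  rw [NormedAddCommGroup.tendsto_nhds_zero]
  intro ε hε
  obtain ⟨S, hS⟩ := summable_iff_vanishing.mp hs (Metric.ball 0 (ε / 2))
    (Metric.ball_mem_nhds 0 (by positivity))
  set C := ∑ p ∈ S, Real.sqrt (((p.1 : ℝ) + 1) * ((p.2 : ℝ) + 1)) * b p with hCdef
  have hC0 : 0 ≤ C := Finset.sum_nonneg fun p _ => mul_nonneg (Real.sqrt_nonneg _) (hb p)
  obtain ⟨N, hN⟩ := exists_nat_gt (2 * C / ε)
  have hN1 : 1 ≤ N := by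
    by_contra h
    interval_cases N
    · simp at hN; nlinarith [div_nonneg (by linarith : (0:ℝ) ≤ 2 * C) hε.le]
  refine eventually_atTop.mpr ⟨(N, N), fun nm hnm => ?_⟩
  obtain ⟨n, m⟩ := nm
  have hn : N ≤ n := hnm.1
  have hm : N ≤ m := hnm.2
  set r := Real.sqrt ((n : ℝ) * (m : ℝ)) with hrdef
  have hNr : (N : ℝ) ≤ r := by
    have : ((N : ℝ) * N) ≤ (n : ℝ) * m := by
      have := hn; have := hm
      exact mul_le_mul (by exact_mod_cast hn) (by exact_mod_cast hm) (by positivity) (by positivity)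
    calc (N : ℝ) = Real.sqrt ((N : ℝ) * N) := by
          rw [Real.sqrt_mul_self (by positivity)]
      _ ≤ r := Real.sqrt_le_sqrt this
  have hNpos : (0 : ℝ) < N := by exact_mod_cast hN1
  have hrpos : 0 < r := lt_of_lt_of_le hNpos hNr
  set t := Finset.range n ×ˢ Finset.range m with htdef
  -- tail bound
  have htail : ∑ p ∈ t \ S, b p < ε / 2 := by
    have := hS (t \ S) Finset.sdiff_disjoint
    have h1 : |∑ p ∈ t \ S, b p| < ε / 2 := by
      simpa [Real.dist_eq] using this
    exact lt_of_le_of_lt (le_abs_self _) h1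
  have hsqrt_le : ∀ p ∈ t, Real.sqrt (((p.1 : ℝ) + 1) * ((p.2 : ℝ) + 1)) ≤ r := by
    intro p hp
    rw [htdef, Finset.mem_product, Finset.mem_range, Finset.mem_range] at hp
    refine Real.sqrt_le_sqrt ?_
    have h1 : ((p.1 : ℝ) + 1) ≤ n := by exact_mod_cast Nat.succ_le_of_lt hp.1
    have h2 : ((p.2 : ℝ) + 1) ≤ m := by exact_mod_cast Nat.succ_le_of_lt hp.2
    exact mul_le_mul h1 h2 (by positivity) (by positivity)
  have hsplit : ∑ p ∈ t, Real.sqrt (((p.1 : ℝ) + 1) * ((p.2 : ℝ) + 1)) * b p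
      ≤ C + r * (ε / 2) := by
    rw [← Finset.sum_inter_add_sum_sdiff t S
      (fun p => Real.sqrt (((p.1 : ℝ) + 1) * ((p.2 : ℝ) + 1)) * b p)]
    have h1 : ∑ p ∈ t ∩ S, Real.sqrt (((p.1 : ℝ) + 1) * ((p.2 : ℝ) + 1)) * b p ≤ C := by
      refine Finset.sum_le_sum_of_subset_of_nonneg Finset.inter_subset_right ?_
      intro p _ _; exact mul_nonneg (Real.sqrt_nonneg _) (hb p)
    have h2 : ∑ p ∈ t \ S, Real.sqrt (((p.1 : ℝ) + 1) * ((p.2 : ℝ) + 1)) * b p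
        ≤ r * (ε / 2) := by
      calc ∑ p ∈ t \ S, Real.sqrt (((p.1 : ℝ) + 1) * ((p.2 : ℝ) + 1)) * b p
          ≤ ∑ p ∈ t \ S, r * b p := by
            refine Finset.sum_le_sum fun p hp => ?_
            exact mul_le_mul_of_nonneg_right
              (hsqrt_le p (Finset.mem_sdiff.mp hp).1) (hb p)
        _ = r * ∑ p ∈ t \ S, b p := by rw [Finset.mul_sum]
        _ ≤ r * (ε / 2) := by
            exact mul_le_mul_of_nonneg_left htail.le hrpos.le
    linarith
  have hsum_nonneg : 0 ≤ ∑ p ∈ t, Real.sqrt (((p.1 : ℝ) + 1) * ((p.2 : ℝ) + 1)) * b p :=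
    Finset.sum_nonneg fun p _ => mul_nonneg (Real.sqrt_nonneg _) (hb p)
  have hfinal : (∑ p ∈ t, Real.sqrt (((p.1 : ℝ) + 1) * ((p.2 : ℝ) + 1)) * b p) / r < ε := by
    have h1 : (∑ p ∈ t, Real.sqrt (((p.1 : ℝ) + 1) * ((p.2 : ℝ) + 1)) * b p) / r
        ≤ (C + r * (ε / 2)) / r := by
      gcongr
    have h2 : (C + r * (ε / 2)) / r = C / r + ε / 2 := by
      field_simp
    have h3 : C / r ≤ C / N := div_le_div_of_nonneg_left hC0 hNpos hNr
    have h4 : C / N < ε / 2 := by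
      rw [div_lt_iff₀ hNpos]
      nlinarith [(div_lt_iff₀ hε).mp hN]
    calc (∑ p ∈ t, Real.sqrt (((p.1 : ℝ) + 1) * ((p.2 : ℝ) + 1)) * b p) / r
        ≤ C / r + ε / 2 := by rw [← h2]; exact h1
      _ < ε := by linarith
  rw [Real.norm_eq_abs, abs_of_nonneg (div_nonneg hsum_nonneg hrpos.le)]
  exact hfinal

/-- If `∑_{u,v≥1} ‖E_{1,1}(X_{u,v})‖₂/(uv)^{1/2} < ∞`, then
`|E_{0,0}(S_{n,m})|/√(nm) → 0` almost surely as `n ∧ m → ∞`; in particular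
`∑_{u,v≥1} |E_{0,0}(X_{u,v})|/√(uv) < ∞` almost surely. (Stationary setting with
commuting filtrations, `X_{0,0} ∈ L²` centered; no ergodicity is needed.) -/
theorem conditional_mean_negligible
    (μ : Measure Ω2) [IsProbabilityMeasure μ] (f : Ω2 → ℝ)
    (hf : Measurable[Ffil 0 0] f)
    (hL2 : MemLp f 2 μ)
    (hmean : ∫ ω, f ω ∂μ = 0)
    (hstat : ∀ u : ℤ × ℤ, MeasurePreserving (shift2 u) μ μ)
    (hcomm : ∀ (a b u v : ℤ) (g : Ω2 → ℝ), Integrable g μ →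
      μ[ μ[g|Ffil a b] | Ffil u v] =ᵐ[μ] μ[g|Ffil (min a u) (min b v)])
    (h2 : ∑' uv : ℕ × ℕ,
        eLpNorm (μ[Xf f ((uv.1 : ℤ) + 1, (uv.2 : ℤ) + 1)|Ffil 1 1]) 2 μ
          / (((uv.1 : ℝ≥0∞) + 1) * ((uv.2 : ℝ≥0∞) + 1)) ^ (1 / 2 : ℝ) ≠ ∞) :
    (∀ᵐ ω ∂μ, Tendsto (fun nm : ℕ × ℕ =>
        |(μ[Ssum f nm.1 nm.2|Ffil 0 0]) ω| / Real.sqrt (nm.1 * nm.2))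
      atTop (𝓝 0)) ∧
    (∀ᵐ ω ∂μ, Summable (fun uv : ℕ × ℕ =>
        |(μ[Xf f ((uv.1 : ℤ) + 1, (uv.2 : ℤ) + 1)|Ffil 0 0]) ω|
          / Real.sqrt ((uv.1 + 1) * (uv.2 + 1)))) := by
  classical
  have hmle : ∀ k l : ℤ, Ffil k l ≤ (inferInstance : MeasurableSpace Ω2) := fun k l =>
    iSup_le fun p => iSup_le fun _ => (measurable_pi_apply p).comap_le
  have hfm : Measurable f := hf.mono (hmle 0 0) le_rfl
  have hXmem : ∀ a : ℤ × ℤ, MemLp (Xf f a) 2 μ := fun a =>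
    hL2.comp_measurePreserving (hstat a)
  have hXint : ∀ a : ℤ × ℤ, Integrable (Xf f a) μ := fun a => (hXmem a).integrable one_le_two
  set sq : ℕ × ℕ → ℝ := fun p => Real.sqrt (((p.1 : ℝ) + 1) * ((p.2 : ℝ) + 1)) with hsq
  have hsqpos : ∀ p, 0 < sq p := fun p => Real.sqrt_pos.mpr (by positivity)
  set gE : ℕ × ℕ → Ω2 → ℝ := fun p => μ[Xf f ((p.1 : ℤ) + 1, (p.2 : ℤ) + 1)|Ffil 0 0] with hgE
  have hgEmeas : ∀ p : ℕ × ℕ, Measurable (gE p) := fun p =>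
    (stronglyMeasurable_condExp.mono (hmle 0 0)).measurable
  have hcontr : ∀ p : ℕ × ℕ, eLpNorm (gE p) 1 μ ≤
      eLpNorm (μ[Xf f ((p.1 : ℤ) + 1, (p.2 : ℤ) + 1)|Ffil 1 1]) 2 μ := by
    intro p
    have h1 : μ[ μ[Xf f ((p.1 : ℤ) + 1, (p.2 : ℤ) + 1)|Ffil 1 1] | Ffil 0 0] =ᵐ[μ] gE p := by
      simpa using hcomm 1 1 0 0 _ (hXint ((p.1 : ℤ) + 1, (p.2 : ℤ) + 1))
    calc eLpNorm (gE p) 1 μ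
        = eLpNorm (μ[ μ[Xf f ((p.1 : ℤ) + 1, (p.2 : ℤ) + 1)|Ffil 1 1] | Ffil 0 0]) 1 μ :=
          (eLpNorm_congr_ae h1).symm
      _ ≤ eLpNorm (μ[Xf f ((p.1 : ℤ) + 1, (p.2 : ℤ) + 1)|Ffil 1 1]) 1 μ :=
          eLpNorm_one_condExp_le_eLpNorm _
      _ ≤ eLpNorm (μ[Xf f ((p.1 : ℤ) + 1, (p.2 : ℤ) + 1)|Ffil 1 1]) 2 μ :=
          eLpNorm_le_eLpNorm_of_exponent_le one_le_two
            (stronglyMeasurable_condExp.mono (hmle 1 1)).aestronglyMeasurable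
  set D : ℕ × ℕ → ℝ≥0∞ := fun p => (((p.1 : ℝ≥0∞) + 1) * ((p.2 : ℝ≥0∞) + 1)) ^ (1/2 : ℝ)
    with hD
  have hDreal : ∀ p : ℕ × ℕ, (D p).toReal = sq p := by
    intro p
    simp only [hD, hsq]
    rw [← ENNReal.toReal_rpow, Real.sqrt_eq_rpow]
    congr 1
  set G : ℕ × ℕ → Ω2 → ℝ≥0∞ := fun p ω => (‖gE p ω‖₊ : ℝ≥0∞) / D p with hG
  have hGmeas : ∀ p, AEMeasurable (G p) μ := fun p =>
    ((hgEmeas p).nnnorm.coe_nnreal_ennreal.div measurable_const).aemeasurable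
  have hGint : ∀ p, ∫⁻ ω, G p ω ∂μ = eLpNorm (gE p) 1 μ / D p := by
    intro p
    simp only [hG, div_eq_mul_inv]
    rw [lintegral_mul_const'' _ (hgEmeas p).nnnorm.coe_nnreal_ennreal.aemeasurable,
      eLpNorm_one_eq_lintegral_enorm]
    rfl
  have key : ∫⁻ ω, ∑' p, G p ω ∂μ ≠ ∞ := by
    rw [lintegral_tsum hGmeas]
    refine ne_top_of_le_ne_top h2 (ENNReal.tsum_le_tsum fun p => ?_)
    rw [hGint p]
    exact ENNReal.div_le_div_right (hcontr p) _
  have hae : ∀ᵐ ω ∂μ, ∑' p, G p ω < ∞ :=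
    ae_lt_top' (AEMeasurable.ennreal_tsum hGmeas) key
  have part2 : ∀ᵐ ω ∂μ, Summable (fun uv : ℕ × ℕ =>
      |gE uv ω| / Real.sqrt (((uv.1 : ℝ) + 1) * ((uv.2 : ℝ) + 1))) := by
    filter_upwards [hae] with ω hω
    refine (ENNReal.summable_toReal hω.ne).congr fun p => ?_
    simp only [hG]
    rw [ENNReal.toReal_div, hDreal p]
    simp [Real.norm_eq_abs, hsq]
  have hsum_eq : ∀ᵐ ω ∂μ, ∀ n m : ℕ, (μ[Ssum f n m|Ffil 0 0]) ω
      = ∑ u ∈ Finset.Icc 1 n, ∑ v ∈ Finset.Icc 1 m,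
          (μ[Xf f ((u : ℤ), (v : ℤ))|Ffil 0 0]) ω := by
    rw [ae_all_iff]; intro n
    rw [ae_all_iff]; intro m
    have h0 : Ssum f n m = ∑ p ∈ Finset.Icc 1 n ×ˢ Finset.Icc 1 m,
        Xf f ((p.1 : ℤ), (p.2 : ℤ)) := by
      funext ω
      rw [Finset.sum_apply]
      simp [Ssum, Finset.sum_product]
    filter_upwards [condExp_finset_sum (μ := μ) (m := Ffil 0 0)
      (s := Finset.Icc 1 n ×ˢ Finset.Icc 1 m)
      (f := fun p : ℕ × ℕ => Xf f ((p.1 : ℤ), (p.2 : ℤ)))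
      (fun p _ => hXint ((p.1 : ℤ), (p.2 : ℤ)))] with ω hω
    rw [h0, hω, Finset.sum_apply, Finset.sum_product]
  refine ⟨?_, part2⟩
  filter_upwards [hsum_eq, part2] with ω hω hsummable
  set b : ℕ × ℕ → ℝ := fun p => |gE p ω| / sq p with hb
  have hb0 : ∀ p, 0 ≤ b p := fun p => div_nonneg (abs_nonneg _) (hsqpos p).le
  have hbs : Summable b := by
    refine hsummable.congr fun p => ?_
    rw [hb, hsq]
  have hk := kron2 hb0 hbs
  refine squeeze_zero' (Eventually.of_forall fun nm => by positivity)
    (eventually_atTop.mpr ⟨(1, 1), fun nm hnm => ?_⟩) hk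
  obtain ⟨n, m⟩ := nm
  have hn1 : 1 ≤ n := hnm.1
  have hm1 : 1 ≤ m := hnm.2
  have hd : (0 : ℝ) < Real.sqrt ((n : ℝ) * (m : ℝ)) := by
    apply Real.sqrt_pos.mpr
    have h1 : (1 : ℝ) ≤ n := by exact_mod_cast hn1
    have h2 : (1 : ℝ) ≤ m := by exact_mod_cast hm1
    nlinarith
  have hnum : |(μ[Ssum f n m|Ffil 0 0]) ω| ≤
      ∑ p ∈ Finset.range n ×ˢ Finset.range m,
        Real.sqrt (((p.1 : ℝ) + 1) * ((p.2 : ℝ) + 1)) * b p := by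
    rw [hω n m]
    calc |∑ u ∈ Finset.Icc 1 n, ∑ v ∈ Finset.Icc 1 m,
            (μ[Xf f ((u : ℤ), (v : ℤ))|Ffil 0 0]) ω|
        ≤ ∑ u ∈ Finset.Icc 1 n, |∑ v ∈ Finset.Icc 1 m,
            (μ[Xf f ((u : ℤ), (v : ℤ))|Ffil 0 0]) ω| := Finset.abs_sum_le_sum_abs _ _
      _ ≤ ∑ u ∈ Finset.Icc 1 n, ∑ v ∈ Finset.Icc 1 m,
            |(μ[Xf f ((u : ℤ), (v : ℤ))|Ffil 0 0]) ω| :=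
          Finset.sum_le_sum fun u _ => Finset.abs_sum_le_sum_abs _ _
      _ = ∑ i ∈ Finset.range n, ∑ j ∈ Finset.range m,
            |(μ[Xf f (((1 + i : ℕ) : ℤ), ((1 + j : ℕ) : ℤ))|Ffil 0 0]) ω| := by
          rw [sum_Icc_one]
          refine Finset.sum_congr rfl fun i _ => ?_
          rw [sum_Icc_one]
      _ = ∑ i ∈ Finset.range n, ∑ j ∈ Finset.range m,
            Real.sqrt (((i : ℝ) + 1) * ((j : ℝ) + 1)) * b (i, j) := by
          refine Finset.sum_congr rfl fun i _ => Finset.sum_congr rfl fun j _ => ?_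
          have hc1 : ((1 + i : ℕ) : ℤ) = (i : ℤ) + 1 := by push_cast; ring
          have hc2 : ((1 + j : ℕ) : ℤ) = (j : ℤ) + 1 := by push_cast; ring
          rw [hc1, hc2, hb]
          have : gE (i, j) = μ[Xf f ((i : ℤ) + 1, (j : ℤ) + 1)|Ffil 0 0] := rfl
          rw [← this, hsq]
          rw [mul_comm, div_mul_cancel₀]
          exact (hsqpos (i, j)).ne'
      _ = ∑ p ∈ Finset.range n ×ˢ Finset.range m,
            Real.sqrt (((p.1 : ℝ) + 1) * ((p.2 : ℝ) + 1)) * b p := by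
          rw [Finset.sum_product]
  calc |(μ[Ssum f n m|Ffil 0 0]) ω| / Real.sqrt ((n : ℝ) * (m : ℝ))
      ≤ (∑ p ∈ Finset.range n ×ˢ Finset.range m,
          Real.sqrt (((p.1 : ℝ) + 1) * ((p.2 : ℝ) + 1)) * b p)
          / Real.sqrt ((n : ℝ) * (m : ℝ)) := by gcongr
    _ = _ := rfl
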